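/- arXiv:1810.01458 — 3 statements merged into one kernel-verified Lean document; each statement's English description precedes it below -/
import Mathlib

section
/- If F(z) = ∏_{i=1}^n (z - β_i) = ∑_{k=0}^n c_k z^k with β_i ∈ ℂ, then for 0 ≤ k ≤ n, |c_k| ≤ C(n,k) · ((1/n) ∑_{i=1}^n |β_i|^n)^{1 - k/n}. -/
open Polynomial Finset

theorem card_powersetCard_filter_mem {α : Type*} [DecidableEq α] (s : Finset α) (i : α)
    (hi : i ∈ s) (m : ℕ) :
    ((s.powersetCard (m+1)).filter (fun t => i ∈ t)).card = (s.card - 1).choose m := by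
  rw [← Finset.card_erase_of_mem hi, ← Finset.card_powersetCard]
  apply Finset.card_bij' (fun t _ => t.erase i) (fun u _ => insert i u)
  · intro t ht
    simp only [mem_filter] at ht
    exact Finset.insert_erase ht.2
  · intro u hu
    simp only [mem_powersetCard] at hu
    exact Finset.erase_insert (fun h => (Finset.notMem_erase i s) (hu.1 h))
  · intro t ht
    simp only [mem_filter, mem_powersetCard] at ht
    exact mem_powersetCard.2 ⟨Finset.erase_subset_erase _ ht.1.1,
      by rw [Finset.card_erase_of_mem ht.2, ht.1.2]; rfl⟩
  · intro u hu
    simp only [mem_powersetCard] at hu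
    have hiu : i ∉ u := fun h => (Finset.notMem_erase i s) (hu.1 h)
    simp only [mem_filter, mem_powersetCard]
    refine ⟨⟨?_, ?_⟩, Finset.mem_insert_self i u⟩
    · exact Finset.insert_subset hi (hu.1.trans (Finset.erase_subset _ _))
    · rw [Finset.card_insert_of_notMem hiu, hu.2]

set_option maxHeartbeats 1000000 in
theorem coeff_power_mean_bound (n : ℕ) (hn : 1 ≤ n) (β : Fin n → ℂ) (k : ℕ) (hk : k ≤ n) :
    ‖(∏ i, (X - C (β i))).coeff k‖ ≤
      (n.choose k : ℝ) *
        ((1 / (n : ℝ)) * ∑ i, ‖β i‖ ^ n) ^ ((1 : ℝ) - (k : ℝ) / (n : ℝ)) := by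
  have hn0 : (n : ℝ) ≠ 0 := Nat.cast_ne_zero.2 (by omega)
  set a : Fin n → ℝ := fun i => ‖β i‖ with ha_def
  have ha : ∀ i, 0 ≤ a i := fun i => norm_nonneg _
  set A : ℝ := (1 / (n : ℝ)) * ∑ i, a i ^ n with hA_def
  have hA0 : 0 ≤ A := by
    apply mul_nonneg (by positivity)
    exact Finset.sum_nonneg fun i _ => pow_nonneg (ha i) n
  rcases eq_or_lt_of_le hk with rfl | hkn
  · -- k = n case
    have hmonic : (∏ i, (X - C (β i))).Monic :=
      monic_prod_of_monic _ _ (fun i _ => monic_X_sub_C _)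
    have hdeg : (∏ i, (X - C (β i))).natDegree = k := by
      rw [natDegree_prod_of_monic _ _ (fun i _ => monic_X_sub_C _)]
      simp [natDegree_X_sub_C]
    have : (∏ i, (X - C (β i))).coeff k = 1 := by
      have h := hmonic.coeff_natDegree
      rwa [hdeg] at h
    rw [this, norm_one, Nat.choose_self, div_self hn0, sub_self, Real.rpow_zero]
    norm_num
  · -- k < n case
    set m : ℕ := n - k with hm_def
    have hm1 : 1 ≤ m := by omega
    have hm0 : (m : ℝ) ≠ 0 := Nat.cast_ne_zero.2 (by omega)
    -- Step A: coefficient bound by sum over subsets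
    have hcoeff : (∏ i, (X - C (β i))).coeff k
        = ∑ t ∈ (univ : Finset (Fin n)).powersetCard m, ∏ i ∈ t, (-β i) := by
      have h1 : ∀ i : Fin n, X - C (β i) = X + C (-β i) := by
        intro i; rw [map_neg, sub_eq_add_neg]
      simp_rw [h1]
      rw [Finset.prod_X_add_C_coeff univ (fun i => -β i) (by simpa using hk)]
      congr 2
      simp [hm_def]
    have hstepA : ‖(∏ i, (X - C (β i))).coeff k‖
        ≤ ∑ t ∈ (univ : Finset (Fin n)).powersetCard m, ∏ i ∈ t, a i := by
      rw [hcoeff]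
      refine (norm_sum_le _ _).trans_eq ?_
      refine Finset.sum_congr rfl fun t _ => ?_
      rw [norm_prod]
      exact Finset.prod_congr rfl fun i _ => by simp [ha_def]
    -- Step B: AM-GM on each subset
    have hgm : ∀ t ∈ (univ : Finset (Fin n)).powersetCard m,
        ∏ i ∈ t, a i ≤ ∑ i ∈ t, (1 / (m : ℝ)) * a i ^ m := by
      intro t ht
      have htc : t.card = m := (mem_powersetCard.1 ht).2
      have h := Real.geom_mean_le_arith_mean_weighted t (fun _ => 1 / (m : ℝ))
        (fun i => a i ^ m) (fun i _ => by positivity)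
        (by rw [Finset.sum_const, htc, nsmul_eq_mul]; field_simp)
        (fun i _ => pow_nonneg (ha i) m)
      calc ∏ i ∈ t, a i = ∏ i ∈ t, (a i ^ m) ^ ((1 : ℝ) / m) := by
            refine Finset.prod_congr rfl fun i _ => ?_
            rw [← Real.rpow_natCast (a i) m, ← Real.rpow_mul (ha i), mul_one_div,
              div_self hm0, Real.rpow_one]
        _ ≤ _ := h
    -- Counting step
    obtain ⟨m', hm'⟩ : ∃ m', m = m' + 1 := ⟨m - 1, by omega⟩
    have hcount : ∑ t ∈ (univ : Finset (Fin n)).powersetCard m,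
        ∑ i ∈ t, (1 / (m : ℝ)) * a i ^ m
        = ((n - 1).choose (m - 1) : ℝ) * ∑ i, (1 / (m : ℝ)) * a i ^ m := by
      set g : Fin n → ℝ := fun i => (1 / (m : ℝ)) * a i ^ m with hg
      set P := (univ : Finset (Fin n)).powersetCard m with hP
      calc ∑ t ∈ P, ∑ i ∈ t, g i
          = ∑ t ∈ P, ∑ i : Fin n, if i ∈ t then g i else 0 := by
            refine Finset.sum_congr rfl fun t _ => ?_
            rw [Finset.sum_ite_mem, Finset.univ_inter]
        _ = ∑ i : Fin n, ∑ t ∈ P, if i ∈ t then g i else 0 := Finset.sum_comm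
        _ = ∑ i : Fin n, ((P.filter (fun t => i ∈ t)).card : ℝ) * g i := by
            refine Finset.sum_congr rfl fun i _ => ?_
            rw [← Finset.sum_filter, Finset.sum_const, nsmul_eq_mul]
        _ = ((n - 1).choose (m - 1) : ℝ) * ∑ i, g i := by
            rw [Finset.mul_sum]
            refine Finset.sum_congr rfl fun i _ => ?_
            congr 2
            rw [hP, hm', card_powersetCard_filter_mem univ i (Finset.mem_univ i) m']
            simp
    -- combine B and counting with binomial identity
    have hnat : n * (n - 1).choose (m - 1) = n.choose m * m := by
      have h := Nat.add_one_mul_choose_eq (n - 1) (m - 1)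
      have h1 : n - 1 + 1 = n := by omega
      have h2 : m - 1 + 1 = m := by omega
      rwa [h1, h2] at h
    have hratio : ((n - 1).choose (m - 1) : ℝ) * (1 / (m : ℝ))
        = (n.choose m : ℝ) * (1 / (n : ℝ)) := by
      have h : ((n : ℝ)) * ((n - 1).choose (m - 1) : ℝ) = (n.choose m : ℝ) * (m : ℝ) := by
        exact_mod_cast hnat
      field_simp
      nlinarith [h]
    have hstepB : ∑ t ∈ (univ : Finset (Fin n)).powersetCard m, ∏ i ∈ t, a i
        ≤ (n.choose m : ℝ) * ((1 / (n : ℝ)) * ∑ i, a i ^ m) := by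
      calc ∑ t ∈ (univ : Finset (Fin n)).powersetCard m, ∏ i ∈ t, a i
          ≤ ∑ t ∈ (univ : Finset (Fin n)).powersetCard m,
              ∑ i ∈ t, (1 / (m : ℝ)) * a i ^ m := Finset.sum_le_sum hgm
        _ = ((n - 1).choose (m - 1) : ℝ) * ∑ i, (1 / (m : ℝ)) * a i ^ m := hcount
        _ = ((n - 1).choose (m - 1) : ℝ) * (1 / (m : ℝ)) * ∑ i, a i ^ m := by
            rw [← Finset.mul_sum, ← mul_assoc]
        _ = (n.choose m : ℝ) * (1 / (n : ℝ)) * ∑ i, a i ^ m := by rw [hratio]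
        _ = (n.choose m : ℝ) * ((1 / (n : ℝ)) * ∑ i, a i ^ m) := by ring
    -- Step C: power mean inequality
    have hmn : (m : ℝ) ≤ (n : ℝ) := by exact_mod_cast Nat.sub_le n k
    have hp : 1 ≤ (n : ℝ) / (m : ℝ) := (one_le_div (by positivity)).2 hmn
    have hJ := Real.rpow_arith_mean_le_arith_mean_rpow univ (fun _ => 1 / (n : ℝ))
      (fun i => a i ^ m) (fun i _ => by positivity)
      (by rw [Finset.sum_const, Finset.card_univ, Fintype.card_fin, nsmul_eq_mul]; field_simp)
      (fun i _ => pow_nonneg (ha i) m) hp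
    have hRHS : ∑ i, (1 / (n : ℝ)) * (a i ^ m) ^ ((n : ℝ) / m) = A := by
      rw [hA_def, Finset.mul_sum]
      refine Finset.sum_congr rfl fun i _ => ?_
      congr 1
      rw [← Real.rpow_natCast (a i) m, ← Real.rpow_mul (ha i),
        mul_div_cancel₀ _ hm0, Real.rpow_natCast]
    set L : ℝ := (1 / (n : ℝ)) * ∑ i, a i ^ m with hL_def
    have hL0 : 0 ≤ L := by
      apply mul_nonneg (by positivity)
      exact Finset.sum_nonneg fun i _ => pow_nonneg (ha i) m
    have hLsum : L = ∑ i, (1 / (n : ℝ)) * a i ^ m := by rw [hL_def, Finset.mul_sum]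
    have hJ' : L ^ ((n : ℝ) / m) ≤ A := by
      rw [hLsum]; exact hJ.trans_eq hRHS
    have hstepC : L ≤ A ^ ((m : ℝ) / n) := by
      have h1 : (L ^ ((n : ℝ) / m)) ^ ((m : ℝ) / n) ≤ A ^ ((m : ℝ) / n) :=
        Real.rpow_le_rpow (Real.rpow_nonneg hL0 _) hJ' (by positivity)
      have hone : ((n : ℝ) / m) * ((m : ℝ) / n) = 1 := by field_simp
      calc L = (L ^ ((n : ℝ) / m)) ^ ((m : ℝ) / n) := by
            rw [← Real.rpow_mul hL0, hone, Real.rpow_one]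
        _ ≤ A ^ ((m : ℝ) / n) := h1
    -- final combination
    have hexp : (1 : ℝ) - (k : ℝ) / (n : ℝ) = (m : ℝ) / (n : ℝ) := by
      rw [hm_def, Nat.cast_sub hk]
      field_simp
    have hchoose : n.choose m = n.choose k := by rw [hm_def]; exact Nat.choose_symm hk
    rw [hexp, ← hchoose]
    exact hstepA.trans (hstepB.trans (mul_le_mul_of_nonneg_left hstepC (Nat.cast_nonneg _)))
end

section
/- The elementary symmetric mean bound: for nonnegative reals x_1, …, x_n and 0 ≤ k ≤ n, the elementary symmetric polynomial satisfies e_{n-k}(x_1,…,x_n) ≤ C(n,k) · ((1/n) ∑_{i=1}^n x_i^n)^{(n-k)/n}. -/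
open Finset

private lemma card_filter_mem_powersetCard (n m : ℕ) (hm : 1 ≤ m) (i : Fin n) :
    (((univ : Finset (Fin n)).powersetCard m).filter (fun S => i ∈ S)).card
      = (n - 1).choose (m - 1) := by
  have h : (((univ : Finset (Fin n)).powersetCard m).filter (fun S => i ∈ S)).card
      = (((univ : Finset (Fin n)).erase i).powersetCard (m - 1)).card := by
    refine Finset.card_bij' (fun S _ => S.erase i) (fun T _ => insert i T) ?_ ?_ ?_ ?_
    case refine_1 =>
      intro S hS
      simp only [mem_filter, mem_powersetCard] at hS
      exact mem_powersetCard.2 ⟨erase_subset_erase i hS.1.1, by rw [card_erase_of_mem hS.2, hS.1.2]⟩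
    case refine_2 =>
      intro T hT
      simp only [mem_powersetCard] at hT
      have hiT : i ∉ T := fun h => (mem_erase.1 (hT.1 h)).1 rfl
      simp only [mem_filter, mem_powersetCard]
      refine ⟨⟨subset_univ _, ?_⟩, mem_insert_self i T⟩
      rw [card_insert_of_notMem hiT, hT.2]
      omega
    case refine_3 =>
      intro S hS
      simp only [mem_filter] at hS
      exact insert_erase hS.2
    case refine_4 =>
      intro T hT
      simp only [mem_powersetCard] at hT
      exact erase_insert (fun h => (mem_erase.1 (hT.1 h)).1 rfl)
  rw [h, card_powersetCard, card_erase_of_mem (mem_univ i), card_univ, Fintype.card_fin]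

theorem esymm_power_mean_bound (n : ℕ) (hn : 1 ≤ n) (x : Fin n → ℝ) (hx : ∀ i, 0 ≤ x i)
    (k : ℕ) (hk : k ≤ n) :
    ∑ S ∈ Finset.univ.powersetCard (n - k), ∏ i ∈ S, x i ≤
      (n.choose k : ℝ) * ((1 / (n : ℝ)) * ∑ i, x i ^ n) ^ (((n : ℝ) - (k : ℝ)) / (n : ℝ)) := by
  have hnR : (0:ℝ) < n := by exact_mod_cast hn
  set m := n - k with hmdef
  have hmn : m ≤ n := Nat.sub_le n k
  have hexp : ((n:ℝ) - (k:ℝ)) / (n:ℝ) = (m:ℝ) / (n:ℝ) := by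
    rw [hmdef, Nat.cast_sub hk]
  have hchoose : (n.choose k : ℝ) = (n.choose m : ℝ) := by
    rw [hmdef, Nat.choose_symm hk]
  rw [hexp, hchoose]
  set A := ∑ i, x i ^ n with hAdef
  have hA : 0 ≤ A := Finset.sum_nonneg fun i _ => pow_nonneg (hx i) n
  rcases Nat.eq_zero_or_pos m with hm0 | hm1
  · rw [hm0]
    simp [powersetCard_zero, Real.rpow_zero]
  have hmR : (0:ℝ) < m := by exact_mod_cast hm1
  set C := n.choose m with hCdef
  have hC : 0 < C := Nat.choose_pos hmn
  have hCR : (0:ℝ) < C := by exact_mod_cast hC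
  set s := (univ : Finset (Fin n)).powersetCard m with hsdef
  have hznn : ∀ S, (0:ℝ) ≤ (1/(m:ℝ)) * ∑ i ∈ S, x i ^ n := by
    intro S
    have : (0:ℝ) ≤ ∑ i ∈ S, x i ^ n := Finset.sum_nonneg fun i _ => pow_nonneg (hx i) n
    positivity
  -- step 1 : per-subset AM-GM
  have step1 : ∀ S ∈ s,
      ∏ i ∈ S, x i ≤ ((1/(m:ℝ)) * ∑ i ∈ S, x i ^ n) ^ ((m:ℝ)/(n:ℝ)) := by
    intro S hS
    have hcardS : S.card = m := (mem_powersetCard.1 hS).2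
    have heach : ∀ i : Fin n, ((x i ^ n) ^ ((1:ℝ)/(m:ℝ))) ^ ((m:ℝ)/(n:ℝ)) = x i := by
      intro i
      rw [← Real.rpow_natCast (x i) n, ← Real.rpow_mul (hx i), ← Real.rpow_mul (hx i),
        show (n:ℝ) * ((1:ℝ)/(m:ℝ)) * ((m:ℝ)/(n:ℝ)) = 1 by field_simp, Real.rpow_one]
    have hprod : ∏ i ∈ S, x i = (∏ i ∈ S, (x i ^ n) ^ ((1:ℝ)/(m:ℝ))) ^ ((m:ℝ)/(n:ℝ)) := by
      rw [← Real.finset_prod_rpow S _ (fun i _ => Real.rpow_nonneg (pow_nonneg (hx i) n) _)]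
      exact (Finset.prod_congr rfl fun i _ => (heach i).symm)
    have hgm := Real.geom_mean_le_arith_mean_weighted S (fun _ => 1/(m:ℝ))
      (fun i => x i ^ n) (fun i _ => by positivity)
      (by rw [Finset.sum_const, hcardS, nsmul_eq_mul]; field_simp)
      (fun i _ => pow_nonneg (hx i) n)
    rw [hprod]
    apply Real.rpow_le_rpow
      (Finset.prod_nonneg fun i _ => Real.rpow_nonneg (pow_nonneg (hx i) n) _)
    · calc ∏ i ∈ S, (x i ^ n) ^ ((1:ℝ)/(m:ℝ)) ≤ ∑ i ∈ S, (1/(m:ℝ)) * x i ^ n := hgm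
        _ = (1/(m:ℝ)) * ∑ i ∈ S, x i ^ n := (Finset.mul_sum _ _ _).symm
    · positivity
  -- double counting
  have hdc : ∑ S ∈ s, ∑ i ∈ S, x i ^ n = ((n-1).choose (m-1) : ℝ) * A := by
    have h1 : ∀ S ∈ s, ∑ i ∈ S, x i ^ n = ∑ i : Fin n, if i ∈ S then x i ^ n else 0 := by
      intro S _
      rw [sum_ite_mem, univ_inter]
    rw [sum_congr rfl h1, Finset.sum_comm]
    have h2 : ∀ i : Fin n,
        (∑ S ∈ s, if i ∈ S then x i ^ n else 0) = ((n-1).choose (m-1) : ℝ) * x i ^ n := by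
      intro i
      rw [← sum_filter, sum_const, hsdef, card_filter_mem_powersetCard n m hm1 i, nsmul_eq_mul]
    rw [sum_congr rfl fun i _ => h2 i, ← Finset.mul_sum]
  have hnat : (n:ℝ) * ((n-1).choose (m-1) : ℝ) = (C:ℝ) * (m:ℝ) := by
    have h := Nat.add_one_mul_choose_eq (n-1) (m-1)
    rw [show n - 1 + 1 = n by omega, show m - 1 + 1 = m by omega] at h
    exact_mod_cast h
  have hsum_eq : ∑ S ∈ s, (1/(C:ℝ)) * ((1/(m:ℝ)) * ∑ i ∈ S, x i ^ n) = (1/(n:ℝ)) * A := by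
    rw [← Finset.mul_sum, ← Finset.mul_sum, hdc]
    field_simp
    linear_combination A * hnat
  -- step 2 : concavity (power mean)
  have key : ∑ S ∈ s, (1/(C:ℝ)) * ((1/(m:ℝ)) * ∑ i ∈ S, x i ^ n) ^ ((m:ℝ)/(n:ℝ))
      ≤ (∑ S ∈ s, (1/(C:ℝ)) * (((1/(m:ℝ)) * ∑ i ∈ S, x i ^ n) ^ ((m:ℝ)/(n:ℝ))) ^ ((n:ℝ)/(m:ℝ)))
          ^ (1/((n:ℝ)/(m:ℝ))) :=
    Real.arith_mean_le_rpow_mean s (fun _ => 1/(C:ℝ))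
      (fun S => ((1/(m:ℝ)) * ∑ i ∈ S, x i ^ n) ^ ((m:ℝ)/(n:ℝ)))
      (fun _ _ => by positivity)
      (by rw [sum_const, hsdef, card_powersetCard, card_univ, Fintype.card_fin, ← hCdef,
          nsmul_eq_mul]; field_simp)
      (fun S _ => Real.rpow_nonneg (hznn S) _)
      (by rw [le_div_iff₀ hmR, one_mul]; exact_mod_cast hmn)
  have h3 : ∀ S ∈ s, ((((1/(m:ℝ)) * ∑ i ∈ S, x i ^ n) ^ ((m:ℝ)/(n:ℝ))) ^ ((n:ℝ)/(m:ℝ)))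
      = (1/(m:ℝ)) * ∑ i ∈ S, x i ^ n := by
    intro S _
    rw [← Real.rpow_mul (hznn S),
      show (m:ℝ)/(n:ℝ) * ((n:ℝ)/(m:ℝ)) = 1 by field_simp, Real.rpow_one]
  have h4 : ∑ S ∈ s, (1/(C:ℝ)) * (((1/(m:ℝ)) * ∑ i ∈ S, x i ^ n) ^ ((m:ℝ)/(n:ℝ))) ^ ((n:ℝ)/(m:ℝ))
      = ∑ S ∈ s, (1/(C:ℝ)) * ((1/(m:ℝ)) * ∑ i ∈ S, x i ^ n) :=
    Finset.sum_congr rfl fun S hS => by rw [h3 S hS]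
  rw [one_div_div, h4, hsum_eq] at key
  calc ∑ S ∈ s, ∏ i ∈ S, x i
      ≤ ∑ S ∈ s, ((1/(m:ℝ)) * ∑ i ∈ S, x i ^ n) ^ ((m:ℝ)/(n:ℝ)) :=
        Finset.sum_le_sum step1
    _ = (C:ℝ) * ∑ S ∈ s, (1/(C:ℝ)) * ((1/(m:ℝ)) * ∑ i ∈ S, x i ^ n) ^ ((m:ℝ)/(n:ℝ)) := by
        rw [← Finset.mul_sum]
        field_simp
    _ ≤ (C:ℝ) * ((1/(n:ℝ)) * A) ^ ((m:ℝ)/(n:ℝ)) :=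
        mul_le_mul_of_nonneg_left key (le_of_lt hCR)
end

section
/- Second operator equivalence: with γ, λ > 0, α_i ∈ ℂ none of modulus γλ, F_γ(z) = ∏(z − α_i/γ), F_λ(z) = ∏(z − α_i/λ), and outer factors G_γ, G_λ from the factorizations F_γ = B_λ·G_γ and F_λ = B_γ·G_λ (a root α_i/γ of F_γ is captured by λ-Blaschke iff |α_i| < γλ, and similarly a root α_i/λ of F_λ is captured by γ-Blaschke iff |α_i| < γλ), then γⁿ G_γ(λz) = λⁿ G_λ(γz) for all z. -/
open Finset

theorem second_operator_equivalence (n : ℕ) (α : Fin n → ℂ) (γ l : ℝ)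
    (hγ : 0 < γ) (hl : 0 < l) (hα : ∀ i, ‖α i‖ ≠ γ * l) (z : ℂ) :
    (γ : ℂ) ^ n *
        ∏ i, (if ‖α i‖ < γ * l then
            (1 / (l : ℂ)) * ((l : ℂ) ^ 2 - starRingEnd ℂ (α i / (γ : ℂ)) * ((l : ℂ) * z))
          else (l : ℂ) * z - α i / (γ : ℂ)) =
      (l : ℂ) ^ n *
        ∏ i, (if ‖α i‖ < γ * l then
            (1 / (γ : ℂ)) * ((γ : ℂ) ^ 2 - starRingEnd ℂ (α i / (l : ℂ)) * ((γ : ℂ) * z))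
          else (γ : ℂ) * z - α i / (l : ℂ)) := by
  have hγ' : (γ : ℂ) ≠ 0 := by exact_mod_cast hγ.ne'
  have hl' : (l : ℂ) ≠ 0 := by exact_mod_cast hl.ne'
  have h : ∀ i : Fin n,
      (γ : ℂ) * (if ‖α i‖ < γ * l then
            (1 / (l : ℂ)) * ((l : ℂ) ^ 2 - starRingEnd ℂ (α i / (γ : ℂ)) * ((l : ℂ) * z))
          else (l : ℂ) * z - α i / (γ : ℂ)) =
      (l : ℂ) * (if ‖α i‖ < γ * l then
            (1 / (γ : ℂ)) * ((γ : ℂ) ^ 2 - starRingEnd ℂ (α i / (l : ℂ)) * ((γ : ℂ) * z))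
          else (γ : ℂ) * z - α i / (l : ℂ)) := by
    intro i
    rw [map_div₀, map_div₀, Complex.conj_ofReal, Complex.conj_ofReal]
    split <;> field_simp <;> ring
  calc (γ : ℂ) ^ n * ∏ i, _ = ∏ i : Fin n, (γ : ℂ) * _ := by
        rw [Finset.prod_mul_distrib, Finset.prod_const, Finset.card_univ, Fintype.card_fin]
    _ = ∏ i : Fin n, (l : ℂ) * _ := Finset.prod_congr rfl fun i _ => h i
    _ = _ := by
        rw [Finset.prod_mul_distrib, Finset.prod_const, Finset.card_univ, Fintype.card_fin]
end
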